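/- Let G be a finite abelian group of type (n_1, …, n_r), i.e., G ≅ ℤ_{n_1} × ⋯ × ℤ_{n_r} with n_1 ≥ 2 and n_i dividing n_{i+1} for each i, and let n = n_1⋯n_r. For all positive integers m ≤ n and h, ρ±(G, m, h) ≤ u±(G, m, h), where u±(G, m, h) = min{Π_{i=1}^r u(n_i, m_i, h) : 1 ≤ m_i ≤ n_i for each i and Π_{i=1}^r m_i ≥ m}. -/

import Mathlib

open Finset Pointwise

/-- The `h`-fold sumset of a finite subset `A` of an abelian group:
`hA = {Σ λ_a • a : λ : A → ℕ, Σ λ_a = h}`. -/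
def foldSumset {G : Type*} [AddCommGroup G] (h : ℕ) (A : Finset G) : Set G :=
  {g | ∃ c : G → ℕ, (∑ a ∈ A, c a) = h ∧ (∑ a ∈ A, c a • a) = g}

/-- The `h`-fold signed sumset of a finite subset `A` of an abelian group:
`h±A = {Σ λ_a • a : λ : A → ℤ, Σ |λ_a| = h}`. -/
def foldSignedSumset {G : Type*} [AddCommGroup G] (h : ℕ) (A : Finset G) : Set G :=
  {g | ∃ c : G → ℤ, (∑ a ∈ A, (c a).natAbs) = h ∧ (∑ a ∈ A, c a • a) = g}

/-- `ρ(G, m, h) = min {|hA| : A ⊆ G, |A| = m}`. -/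
noncomputable def rho (G : Type*) [AddCommGroup G] (m h : ℕ) : ℕ :=
  sInf {k | ∃ A : Finset G, A.card = m ∧ (foldSumset h A).ncard = k}

/-- `ρ±(G, m, h) = min {|h±A| : A ⊆ G, |A| = m}`. -/
noncomputable def rhoPM (G : Type*) [AddCommGroup G] (m h : ℕ) : ℕ :=
  sInf {k | ∃ A : Finset G, A.card = m ∧ (foldSignedSumset h A).ncard = k}

/-- `f_d(m, h) = (h⌈m/d⌉ - h + 1) d`. -/
def fdmh (d m h : ℕ) : ℕ := (h * ((m + d - 1) / d) - h + 1) * d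

/-- `u(n, m, h) = min {f_d(m, h) : d a positive divisor of n}`. -/
noncomputable def uFun (n m h : ℕ) : ℕ :=
  sInf {k | ∃ d : ℕ, 0 < d ∧ d ∣ n ∧ k = fdmh d m h}

/-! ### Auxiliary lemmas -/

lemma aux_natAbs_sum_le {ι : Type*} (s : Finset ι) (f : ι → ℤ) :
    (∑ i ∈ s, f i).natAbs ≤ ∑ i ∈ s, (f i).natAbs := by
  have h1 : ((∑ i ∈ s, f i).natAbs : ℤ) ≤ ((∑ i ∈ s, (f i).natAbs : ℕ) : ℤ) := by
    rw [Int.natCast_natAbs]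
    calc |∑ i ∈ s, f i| ≤ ∑ i ∈ s, |f i| := Finset.abs_sum_le_sum_abs f s
      _ = ((∑ i ∈ s, (f i).natAbs : ℕ) : ℤ) := by push_cast [Int.natCast_natAbs]; rfl
  exact_mod_cast h1

lemma aux_abs_emod_two (a : ℤ) : |a| % 2 = a % 2 := by
  rcases abs_cases a with ⟨h, _⟩ | ⟨h, _⟩
  · rw [h]
  · rw [h]; omega

lemma aux_sum_natAbs_modEq {ι : Type*} (s : Finset ι) (f : ι → ℤ) :
    ((∑ i ∈ s, (f i).natAbs : ℕ) : ℤ) ≡ ∑ i ∈ s, f i [ZMOD 2] := by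
  show ((∑ i ∈ s, (f i).natAbs : ℕ) : ℤ) % 2 = (∑ i ∈ s, f i) % 2
  push_cast [Int.natCast_natAbs]
  rw [Finset.sum_int_mod s 2 (fun i => |f i|), Finset.sum_int_mod s 2 f]
  congr 1
  exact Finset.sum_congr rfl fun i _ => aux_abs_emod_two (f i)

lemma aux_eq_zero_of_dvd_of_abs_lt {a b : ℤ} (h : a ∣ b) (hlt : |b| < a) : b = 0 := by
  rcases h with ⟨t, rfl⟩
  rcases eq_or_ne t 0 with rfl | ht
  · simp
  · exfalso
    have h1 : 0 < a := lt_of_le_of_lt (abs_nonneg _) hlt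
    have h2 : a ≤ |a * t| := by
      rw [abs_mul, abs_of_pos h1]
      nlinarith [Int.one_le_abs ht]
    omega

lemma aux_int_cast_inj {N : ℕ} {x y : ℤ}
    (hxy : (x : ZMod N) = (y : ZMod N)) (habs : |x - y| < N) : x = y := by
  have hd : (N : ℤ) ∣ y - x := ((ZMod.intCast_eq_intCast_iff x y N).mp hxy).dvd
  have := aux_eq_zero_of_dvd_of_abs_lt hd (by rw [abs_sub_comm]; exact habs)
  omega

/-- a symmetric subset of `ZMod N` of any size `m ≤ N`. -/
lemma exists_symm_finset (N m : ℕ) (hN : 0 < N) (hm : 0 < m) (hmN : m ≤ N) :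
    ∃ A : Finset (ZMod N), A.card = m ∧ ∀ x ∈ A, -x ∈ A := by
  haveI : NeZero N := ⟨hN.ne'⟩
  rcases eq_or_lt_of_le hmN with rfl | hlt
  · exact ⟨univ, by rw [Finset.card_univ, ZMod.card], fun x _ => Finset.mem_univ _⟩
  have hmZ : (m : ℤ) < N := by exact_mod_cast hlt
  rcases Nat.even_or_odd m with he | ho
  · -- m even, m < N : use {±1, ..., ±(m/2)}
    obtain ⟨t, rfl⟩ := he
    set J : Finset ℤ := (Finset.Icc (-(t:ℤ)) t).erase 0 with hJ
    have hmem : ∀ x ∈ J, -(t:ℤ) ≤ x ∧ x ≤ t ∧ x ≠ 0 := by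
      intro x hx
      rw [hJ, Finset.mem_erase, Finset.mem_Icc] at hx
      exact ⟨hx.2.1, hx.2.2, hx.1⟩
    have hJcard : J.card = t + t := by
      rw [hJ, Finset.card_erase_of_mem (by simp), Int.card_Icc]
      omega
    have hinj : Set.InjOn (fun x : ℤ => (x : ZMod N)) ↑J := by
      intro x hx y hy hxy
      have hx' := hmem x hx
      have hy' := hmem y hy
      refine aux_int_cast_inj hxy ?_
      rw [abs_lt]
      omega
    refine ⟨J.image (fun x : ℤ => (x : ZMod N)), ?_, ?_⟩
    · rw [Finset.card_image_of_injOn hinj, hJcard]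
    · intro x hx
      obtain ⟨j, hj, rfl⟩ := Finset.mem_image.mp hx
      have hj' := hmem j hj
      refine Finset.mem_image.mpr ⟨-j, ?_, by push_cast; ring⟩
      rw [hJ, Finset.mem_erase, Finset.mem_Icc]
      constructor
      · omega
      · omega
  · -- m odd : use {0, ±1, ..., ±((m-1)/2)}
    obtain ⟨t, rfl⟩ := ho
    set J : Finset ℤ := Finset.Icc (-(t:ℤ)) t with hJ
    have hmem : ∀ x ∈ J, -(t:ℤ) ≤ x ∧ x ≤ t := by
      intro x hx
      rw [hJ, Finset.mem_Icc] at hx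
      exact hx
    have hJcard : J.card = 2 * t + 1 := by
      rw [hJ, Int.card_Icc]
      omega
    have hinj : Set.InjOn (fun x : ℤ => (x : ZMod N)) ↑J := by
      intro x hx y hy hxy
      have hx' := hmem x hx
      have hy' := hmem y hy
      refine aux_int_cast_inj hxy ?_
      rw [abs_lt]
      omega
    refine ⟨J.image (fun x : ℤ => (x : ZMod N)), ?_, ?_⟩
    · rw [Finset.card_image_of_injOn hinj, hJcard]
    · intro x hx
      obtain ⟨j, hj, rfl⟩ := Finset.mem_image.mp hx
      have hj' := hmem j hj
      refine Finset.mem_image.mpr ⟨-j, ?_, by push_cast; ring⟩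
      rw [hJ, Finset.mem_Icc]
      omega

lemma signedSumset_one_subset {N : ℕ} (A : Finset (ZMod N)) (hsymm : ∀ x ∈ A, -x ∈ A) :
    foldSignedSumset 1 A ⊆ ↑A := by
  rintro g ⟨cf, hcf, rfl⟩
  have hex : ∃ a ∈ A, (cf a).natAbs ≠ 0 := by
    by_contra hc
    push_neg at hc
    rw [Finset.sum_eq_zero hc] at hcf
    omega
  obtain ⟨a0, ha0, hne⟩ := hex
  have hsplit := Finset.add_sum_erase A (fun a => (cf a).natAbs) ha0
  rw [hcf] at hsplit
  have h1 : (cf a0).natAbs = 1 := by omega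
  have h0 : ∀ b ∈ A.erase a0, (cf b).natAbs = 0 :=
    Finset.sum_eq_zero_iff.mp (by omega)
  have hg : ∑ a ∈ A, cf a • a = cf a0 • a0 := by
    refine Finset.sum_eq_single_of_mem a0 ha0 fun b hb hbne => ?_
    have : cf b = 0 := Int.natAbs_eq_zero.mp (h0 b (Finset.mem_erase.mpr ⟨hbne, hb⟩))
    rw [this, zero_smul]
  rw [hg]
  rcases Int.natAbs_eq_iff.mp h1 with hcase | hcase <;> rw [hcase]
  · simpa using ha0
  · have := hsymm a0 ha0
    simpa using this

/-- One-dimensional construction for a fixed divisor `d`. -/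
lemma oneD_d (N m h d : ℕ) (hN : 0 < N) (hm : 0 < m) (hmN : m ≤ N) (hh : 0 < h)
    (hd : 0 < d) (hdN : d ∣ N) :
    ∃ A S : Finset (ZMod N), A.card = m ∧ S.card ≤ fdmh d m h ∧
      ∀ h', h' ≤ h → h' % 2 = h % 2 → foldSignedSumset h' A ⊆ ↑S := by
  haveI : NeZero N := ⟨hN.ne'⟩
  obtain ⟨q, hqd⟩ := hdN
  have hq : 0 < q := by
    rcases Nat.eq_zero_or_pos q with rfl | hq
    · simp at hqd; omega
    · exact hq
  obtain ⟨c, hc⟩ : ∃ c, c = (m + d - 1) / d := ⟨_, rfl⟩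
  have hdm := Nat.div_add_mod (m + d - 1) d
  have hmod := Nat.mod_lt (m + d - 1) hd
  have hc1 : 1 ≤ c := by
    rw [hc]
    exact Nat.one_le_div_iff hd |>.mpr (by omega)
  have hmcd : m ≤ c * d := by
    obtain ⟨u, hu⟩ : ∃ u, u = d * ((m + d - 1) / d) := ⟨_, rfl⟩
    have hcu : c * d = u := by rw [hc, hu]; ring
    rw [← hu] at hdm
    omega
  have hcq : c ≤ q := by
    have h5 : (N + d - 1) / d = q := by
      rw [hqd, show d * q + d - 1 = d * q + (d - 1) by omega,
        Nat.mul_add_div hd, Nat.div_eq_of_lt (by omega)]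
      omega
    calc c = (m + d - 1) / d := hc
      _ ≤ (N + d - 1) / d := Nat.div_le_div_right (by omega)
      _ = q := h5
  obtain ⟨L, hL⟩ : ∃ L, L = h * c - h := ⟨_, rfl⟩
  have hLc : L = h * (c - 1) := by
    obtain ⟨c', rfl⟩ : ∃ c', c = c' + 1 := ⟨c - 1, by omega⟩
    rw [hL, Nat.add_sub_cancel]
    have : h * (c' + 1) = h * c' + h := by ring
    omega
  have hLd : fdmh d m h = (L + 1) * d := by
    rw [fdmh, ← hc, ← hL]
  by_cases htriv : N ≤ (L + 1) * d
  · obtain ⟨A, hAsub, hAcard⟩ := Finset.exists_subset_card_eq (s := (univ : Finset (ZMod N))) (n := m)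
      (by rw [Finset.card_univ, ZMod.card]; exact hmN)
    refine ⟨A, univ, hAcard, ?_, fun h' _ _ x _ => by simp⟩
    rw [Finset.card_univ, ZMod.card, hLd]
    exact htriv
  rcases eq_or_lt_of_le (show 1 ≤ h from hh) with hone | hh2
  · -- h = 1
    subst hone
    obtain ⟨A, hAcard, hAsymm⟩ := exists_symm_finset N m hN hm hmN
    refine ⟨A, A, hAcard, ?_, ?_⟩
    · rw [hLd, hAcard]
      have hL0 : L = c - 1 := by omega
      calc m ≤ c * d := hmcd
        _ ≤ (L + 1) * d := Nat.mul_le_mul (by omega) le_rfl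
    · intro h' hle hpar
      have hh1 : h' = 1 := by omega
      rw [hh1]
      exact signedSumset_one_subset A hAsymm
  · -- 2 ≤ h : main construction
    have hLq : L + 1 < q := by
      by_contra hcon
      push_neg at hcon
      refine htriv ?_
      rw [hqd]
      calc d * q ≤ d * (L + 1) := Nat.mul_le_mul le_rfl hcon
        _ = (L + 1) * d := by ring
    have h2c : 2 * (c - 1) < q := by
      calc 2 * (c - 1) ≤ h * (c - 1) := Nat.mul_le_mul_right _ hh2
        _ = L := hLc.symm
        _ < q := by omega
    have hqZ : (0:ℤ) < (q:ℤ) := by exact_mod_cast hq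
    have hNZ : (N:ℤ) = (q:ℤ) * d := by rw [hqd]; push_cast; ring
    have h2cZ : 2 * ((c:ℤ) - 1) < q := by
      have : ((2 * (c - 1) : ℕ) : ℤ) < (q:ℤ) := by exact_mod_cast h2c
      push_cast [Nat.cast_sub hc1] at this
      linarith
    obtain ⟨ι, hι⟩ : ∃ ι : ℕ × ℕ → ZMod N,
        ι = fun p => ((2 * p.1 + q * p.2 + 1 - c : ℤ) : ZMod N) := ⟨_, rfl⟩
    have hιval : ∀ p : ℕ × ℕ, ι p = ((2 * (p.1:ℤ) + (q:ℤ) * p.2 + 1 - (c:ℤ) : ℤ) : ZMod N) := by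
      intro p; rw [hι]
    have hinj : Set.InjOn ι ↑(range c ×ˢ range d) := by
      rintro ⟨j, k⟩ hp ⟨j', k'⟩ hp' hEq
      rw [Finset.mem_coe, Finset.mem_product, Finset.mem_range, Finset.mem_range] at hp hp'
      obtain ⟨hj, hk⟩ := hp
      obtain ⟨hj', hk'⟩ := hp'
      rw [hιval, hιval] at hEq
      have hdvd : (N : ℤ) ∣ (2*(j':ℤ) + q*k' + 1 - c) - (2*(j:ℤ) + q*k + 1 - c) :=
        ((ZMod.intCast_eq_intCast_iff _ _ _).mp hEq).dvd
      have hqN : (q:ℤ) ∣ (N:ℤ) := ⟨d, hNZ⟩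
      have hqd2 : (q:ℤ) ∣ 2*(j':ℤ) - 2*(j:ℤ) := by
        have h1 : (q:ℤ) ∣ (2*(j':ℤ) + q*k' + 1 - c) - (2*(j:ℤ) + q*k + 1 - c) :=
          dvd_trans hqN hdvd
        have h2 : (2*(j':ℤ) + q*k' + 1 - c) - (2*(j:ℤ) + q*k + 1 - c)
            = (2*(j':ℤ) - 2*(j:ℤ)) + (q:ℤ)*((k':ℤ) - k) := by ring
        rw [h2] at h1
        have h3 : (q:ℤ) ∣ (q:ℤ)*((k':ℤ) - k) := Dvd.intro _ rfl
        simpa using h1.sub h3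
      have hjZ : (j:ℤ) < c := by exact_mod_cast hj
      have hjZ' : (j':ℤ) < c := by exact_mod_cast hj'
      have hjj : (j:ℤ) = j' := by
        have h0 : 2*(j':ℤ) - 2*(j:ℤ) = 0 := by
          refine aux_eq_zero_of_dvd_of_abs_lt hqd2 ?_
          rw [abs_lt]
          omega
        omega
      have hjj' : j = j' := by exact_mod_cast hjj
      subst hjj'
      have hkk : k = k' := by
        have h1 : (N:ℤ) ∣ (q:ℤ)*((k':ℤ) - k) := by
          have h2 : (2*(j:ℤ) + q*k' + 1 - c) - (2*(j:ℤ) + q*k + 1 - c)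
              = (q:ℤ)*((k':ℤ) - k) := by ring
          rwa [h2] at hdvd
        rw [hNZ] at h1
        have h3 : (d:ℤ) ∣ ((k':ℤ) - k) := by
          rcases h1 with ⟨t, ht⟩
          refine ⟨t, ?_⟩
          have := ht
          rw [mul_assoc] at this
          exact mul_left_cancel₀ (ne_of_gt hqZ) this
        have h4 : (k':ℤ) - k = 0 := by
          refine aux_eq_zero_of_dvd_of_abs_lt h3 ?_
          have hkZ : (k:ℤ) < d := by exact_mod_cast hk
          have hkZ' : (k':ℤ) < d := by exact_mod_cast hk'
          rw [abs_lt]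
          constructor <;> omega
        omega
      simp [hkk]
    obtain ⟨T, hT⟩ : ∃ T, T = (range c ×ˢ range d).image ι := ⟨_, rfl⟩
    have hTcard : T.card = c * d := by
      rw [hT, Finset.card_image_of_injOn hinj, Finset.card_product,
        Finset.card_range, Finset.card_range]
    obtain ⟨A, hAT, hAcard⟩ := Finset.exists_subset_card_eq (s := T) (n := m) (by rw [hTcard]; exact hmcd)
    obtain ⟨σ, hσ⟩ : ∃ σ : ℕ × ℕ → ZMod N,
        σ = fun p => ((2 * p.1 + q * p.2 - L : ℤ) : ZMod N) := ⟨_, rfl⟩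
    refine ⟨A, (range (L+1) ×ˢ range d).image σ, hAcard, ?_, ?_⟩
    · calc ((range (L+1) ×ˢ range d).image σ).card
          ≤ (range (L+1) ×ˢ range d).card := Finset.card_image_le
        _ = (L+1) * d := by rw [Finset.card_product, Finset.card_range, Finset.card_range]
        _ = fdmh d m h := hLd.symm
    · rintro h' hh' hpar g ⟨cf, hcf, rfl⟩
      classical
      obtain ⟨I, hI⟩ : ∃ I, I = (range c ×ˢ range d).filter (fun p => ι p ∈ A) := ⟨_, rfl⟩
      have hIsub : I ⊆ range c ×ˢ range d := by rw [hI]; exact Finset.filter_subset _ _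
      have hIinj : ∀ p ∈ I, ∀ p' ∈ I, ι p = ι p' → p = p' :=
        fun p hp p' hp' => hinj (Finset.mem_coe.mpr (hIsub hp)) (Finset.mem_coe.mpr (hIsub hp'))
      have hIA : I.image ι = A := by
        apply Finset.Subset.antisymm
        · intro x hx
          obtain ⟨p, hp, rfl⟩ := Finset.mem_image.mp hx
          rw [hI] at hp
          exact (Finset.mem_filter.mp hp).2
        · intro a ha
          obtain ⟨p, hp, rfl⟩ := Finset.mem_image.mp (by rw [← hT]; exact hAT ha)
          exact Finset.mem_image.mpr ⟨p, by rw [hI]; exact Finset.mem_filter.mpr ⟨hp, ha⟩, rfl⟩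
      have hsum1 : ∑ p ∈ I, (cf (ι p)).natAbs = h' := by
        rw [← hcf, ← hIA, Finset.sum_image hIinj]
      have hgval : ∑ a ∈ A, cf a • a
          = ((∑ p ∈ I, cf (ι p) * (2*(p.1:ℤ) + (q:ℤ)*p.2 + 1 - (c:ℤ)) : ℤ) : ZMod N) := by
        rw [← hIA, Finset.sum_image hIinj, Int.cast_sum]
        refine Finset.sum_congr rfl fun p hp => ?_
        rw [hιval p, Int.cast_mul, zsmul_eq_mul]
      obtain ⟨X, hX⟩ : ∃ X, X = ∑ p ∈ I, cf (ι p) * (2*(p.1:ℤ) + 1 - (c:ℤ)) := ⟨_, rfl⟩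
      obtain ⟨Y, hY⟩ : ∃ Y, Y = ∑ p ∈ I, cf (ι p) * (p.2:ℤ) := ⟨_, rfl⟩
      have hW : (∑ p ∈ I, cf (ι p) * (2*(p.1:ℤ) + (q:ℤ)*p.2 + 1 - (c:ℤ))) = X + (q:ℤ) * Y := by
        rw [hX, hY, Finset.mul_sum, ← Finset.sum_add_distrib]
        refine Finset.sum_congr rfl fun p _ => by ring
      have hc1Z : (1:ℤ) ≤ (c:ℤ) := by exact_mod_cast hc1
      have habsX : |X| ≤ (h':ℤ) * ((c:ℤ) - 1) := by
        rw [hX]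
        calc |∑ p ∈ I, cf (ι p) * (2*(p.1:ℤ) + 1 - (c:ℤ))|
            ≤ ∑ p ∈ I, |cf (ι p) * (2*(p.1:ℤ) + 1 - (c:ℤ))| := Finset.abs_sum_le_sum_abs _ _
          _ ≤ ∑ p ∈ I, ((cf (ι p)).natAbs : ℤ) * ((c:ℤ) - 1) := by
              refine Finset.sum_le_sum fun p hp => ?_
              rw [abs_mul, ← Int.natCast_natAbs]
              refine mul_le_mul_of_nonneg_left ?_ (by positivity)
              have hp1 : p.1 < c := by
                have := Finset.mem_product.mp (hIsub hp)
                exact Finset.mem_range.mp this.1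
              have hp1Z : (p.1 : ℤ) < c := by exact_mod_cast hp1
              have hp1Z' : (0:ℤ) ≤ (p.1:ℤ) := by positivity
              rw [abs_le]
              constructor <;> omega
          _ = (h':ℤ) * ((c:ℤ)-1) := by
              rw [← Finset.sum_mul]
              congr 1
              rw [← hsum1]
              push_cast
              rfl
      have hLZ : (L:ℤ) = (h:ℤ) * ((c:ℤ) - 1) := by
        rw [hLc, Nat.cast_mul, Nat.cast_sub hc1, Nat.cast_one]
      have hXL : |X| ≤ (L:ℤ) := by
        rw [hLZ]
        calc |X| ≤ (h':ℤ) * ((c:ℤ)-1) := habsX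
          _ ≤ (h:ℤ) * ((c:ℤ)-1) := by
              refine mul_le_mul_of_nonneg_right ?_ (by linarith)
              exact_mod_cast hh'
      have hparZ : (h':ℤ) % 2 = (h:ℤ) % 2 := by omega
      have hparX : X ≡ (L:ℤ) [ZMOD 2] := by
        have e1 : X ≡ (1 - (c:ℤ)) * ∑ p ∈ I, cf (ι p) [ZMOD 2] := by
          refine (Int.modEq_iff_dvd.mpr ?_).symm
          have heq : X - (1 - (c:ℤ)) * ∑ p ∈ I, cf (ι p)
              = ∑ p ∈ I, 2 * (cf (ι p) * (p.1:ℤ)) := by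
            rw [hX, Finset.mul_sum, ← Finset.sum_sub_distrib]
            refine Finset.sum_congr rfl fun p _ => by ring
          rw [heq]
          exact Finset.dvd_sum fun p _ => Dvd.intro _ rfl
        have e3 : (∑ p ∈ I, cf (ι p)) ≡ (h':ℤ) [ZMOD 2] := by
          have := aux_sum_natAbs_modEq I (fun p => cf (ι p))
          rw [hsum1] at this
          exact this.symm
        calc X ≡ (1 - (c:ℤ)) * ∑ p ∈ I, cf (ι p) [ZMOD 2] := e1
          _ ≡ (1 - (c:ℤ)) * (h':ℤ) [ZMOD 2] := Int.ModEq.mul_left _ e3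
          _ ≡ (1 - (c:ℤ)) * (h:ℤ) [ZMOD 2] := Int.ModEq.mul_left _ hparZ
          _ ≡ (L:ℤ) [ZMOD 2] := by
              refine Int.modEq_iff_dvd.mpr ?_
              rw [hLZ]
              exact ⟨(h:ℤ) * ((c:ℤ) - 1), by ring⟩
      have hXL2 : (2:ℤ) ∣ X + L := by
        have hdL : (2:ℤ) ∣ (L:ℤ) - X := Int.ModEq.dvd hparX
        rcases hdL with ⟨t, ht⟩
        exact ⟨(L:ℤ) - t, by omega⟩
      obtain ⟨i0, hi0⟩ := hXL2
      have hXabs := abs_le.mp hXL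
      have hi0b : 0 ≤ i0 ∧ i0 ≤ (L:ℤ) := by omega
      have hd0Z : (0:ℤ) < (d:ℤ) := by exact_mod_cast hd
      obtain ⟨k0, hk0⟩ : ∃ k0 : ℕ, (k0:ℤ) = Y % d :=
        ⟨(Y % d).toNat, Int.toNat_of_nonneg (Int.emod_nonneg Y (by omega))⟩
      have hk0d : k0 < d := by
        have := Int.emod_lt_of_pos Y hd0Z
        omega
      rw [hgval, hW]
      refine Finset.mem_coe.mpr (Finset.mem_image.mpr ⟨(i0.toNat, k0),
        Finset.mem_product.mpr ⟨Finset.mem_range.mpr ?_, Finset.mem_range.mpr hk0d⟩, ?_⟩)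
      · have : (i0.toNat : ℤ) = i0 := Int.toNat_of_nonneg hi0b.1
        omega
      · rw [hσ]
        show ((2 * (i0.toNat:ℕ) + q * k0 + 0 - L : ℤ) : ZMod N) = ((X + (q:ℤ)*Y : ℤ) : ZMod N)
        refine (ZMod.intCast_eq_intCast_iff _ _ _).mpr ?_
        have h2i : 2 * (i0.toNat : ℤ) = X + L := by
          rw [Int.toNat_of_nonneg hi0b.1]
          omega
        have hYmod : (2*(i0.toNat:ℤ) + (q:ℤ)*(k0:ℤ) + 0 - (L:ℤ)) = X + (q:ℤ) * (Y % d) := by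
          rw [h2i, hk0]
          ring
        push_cast
        push_cast at hYmod
        rw [hYmod]
        refine Int.ModEq.add_left X ?_
        refine Int.modEq_iff_dvd.mpr ⟨Y / (d:ℤ), ?_⟩
        rw [Int.emod_def, hNZ]
        ring

/-- One-dimensional lemma: construction achieving `uFun`. -/
lemma oneD (N m h : ℕ) (hN : 0 < N) (hm : 0 < m) (hmN : m ≤ N) (hh : 0 < h) :
    ∃ A S : Finset (ZMod N), A.card = m ∧ S.card ≤ uFun N m h ∧
      ∀ h', h' ≤ h → h' % 2 = h % 2 → foldSignedSumset h' A ⊆ ↑S := by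
  have hne : {k | ∃ d : ℕ, 0 < d ∧ d ∣ N ∧ k = fdmh d m h}.Nonempty :=
    ⟨fdmh 1 m h, 1, one_pos, one_dvd N, rfl⟩
  obtain ⟨d, hd0, hdN, hEq⟩ := Nat.sInf_mem hne
  obtain ⟨A, S, h1, h2, h3⟩ := oneD_d N m h d hN hm hmN hh hd0 hdN
  refine ⟨A, S, h1, ?_, h3⟩
  rw [uFun, hEq]
  exact h2

/-- `ρ±(G, m, h) ≤ u±(G, m, h)` for a group `G` of type `(n_1, …, n_r)`. -/
theorem rhoPM_le_uPM (r : ℕ) (hr : 0 < r) (n : Fin r → ℕ)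
    (hn1 : 2 ≤ n ⟨0, hr⟩)
    (hchain : ∀ i : Fin r, ∀ hi : i.val + 1 < r, n i ∣ n ⟨i.val + 1, hi⟩)
    (G : Type*) [AddCommGroup G] [Fintype G]
    (e : G ≃+ ((i : Fin r) → ZMod (n i)))
    (m h : ℕ) (hm : 0 < m) (hmn : m ≤ ∏ i, n i) (hh : 0 < h) :
    rhoPM G m h ≤
      sInf {k | ∃ ms : Fin r → ℕ, (∀ i, 1 ≤ ms i ∧ ms i ≤ n i) ∧
        m ≤ ∏ i, ms i ∧ k = ∏ i, uFun (n i) (ms i) h} := by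
  classical
  have hnpos : ∀ i, 0 < n i := by
    intro i
    rcases Nat.eq_zero_or_pos (n i) with hz | hp
    · exfalso
      have : ∏ j, n j = 0 := Finset.prod_eq_zero (Finset.mem_univ i) hz
      omega
    · exact hp
  have hne : {k | ∃ ms : Fin r → ℕ, (∀ i, 1 ≤ ms i ∧ ms i ≤ n i) ∧
      m ≤ ∏ i, ms i ∧ k = ∏ i, uFun (n i) (ms i) h}.Nonempty :=
    ⟨∏ i, uFun (n i) (n i) h, n, fun i => ⟨hnpos i, le_refl _⟩, hmn, rfl⟩
  obtain ⟨ms, hms, hmsm, hval⟩ := Nat.sInf_mem hne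
  rw [hval]
  -- per-coordinate constructions
  choose A S hA hS hsub using fun i => oneD (n i) (ms i) h (hnpos i) (hms i).1 (hms i).2 hh
  obtain ⟨B, hBsub, hBcard⟩ := Finset.exists_subset_card_eq (s := Fintype.piFinset A) (n := m)
    (by rw [Fintype.card_piFinset]; calc m ≤ ∏ i, ms i := hmsm
          _ = ∏ i, (A i).card := by refine Finset.prod_congr rfl fun i _ => (hA i).symm)
  obtain ⟨AG, hAG⟩ : ∃ AG : Finset G, AG = B.image (fun b => e.symm b) := ⟨_, rfl⟩
  have hAGcard : AG.card = m := by
    rw [hAG, Finset.card_image_of_injective B e.symm.injective, hBcard]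
  have hsubset : foldSignedSumset h AG ⊆
      ↑((Fintype.piFinset S).image (fun b => e.symm b)) := by
    rintro g ⟨cf, hcf, rfl⟩
    have hEsum : e (∑ a ∈ AG, cf a • a) = ∑ b ∈ B, cf (e.symm b) • b := by
      calc e (∑ a ∈ AG, cf a • a) = ∑ a ∈ AG, cf a • e a := by
            rw [map_sum]
            exact Finset.sum_congr rfl fun a _ => map_zsmul e _ _
        _ = ∑ b ∈ B, cf (e.symm b) • e (e.symm b) := by
            rw [hAG, Finset.sum_image (fun x _ y _ hxy => e.symm.injective hxy)]
        _ = ∑ b ∈ B, cf (e.symm b) • b := by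
            refine Finset.sum_congr rfl fun b _ => ?_
            rw [AddEquiv.apply_symm_apply]
    have hPiMem : e (∑ a ∈ AG, cf a • a) ∈ Fintype.piFinset S := by
      rw [Fintype.mem_piFinset]
      intro i
      have hmaps : ∀ b ∈ B, b i ∈ A i :=
        fun b hb => (Fintype.mem_piFinset.mp (hBsub hb)) i
      obtain ⟨μ, hμ⟩ : ∃ μ : ZMod (n i) → ℤ,
          μ = fun x => ∑ b ∈ B.filter (fun b => b i = x), cf (e.symm b) := ⟨_, rfl⟩
      have hvalμ : ∑ x ∈ A i, μ x • x = e (∑ a ∈ AG, cf a • a) i := by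
        rw [hEsum, Finset.sum_apply]
        rw [← Finset.sum_fiberwise_of_maps_to hmaps (fun b => (cf (e.symm b) • b) i)]
        refine Finset.sum_congr rfl fun x hx => ?_
        simp only [hμ]
        rw [Finset.sum_smul]
        refine Finset.sum_congr rfl fun b hb => ?_
        rw [Pi.smul_apply, (Finset.mem_filter.mp hb).2]
      have hcfB : ∑ b ∈ B, (cf (e.symm b)).natAbs = h := by
        rw [← hcf, hAG, Finset.sum_image (fun x _ y _ hxy => e.symm.injective hxy)]
      have hμB : ∑ x ∈ A i, μ x = ∑ b ∈ B, cf (e.symm b) := by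
        simp only [hμ]
        exact Finset.sum_fiberwise_of_maps_to hmaps (fun b => cf (e.symm b))
      have hle : ∑ x ∈ A i, (μ x).natAbs ≤ h := by
        calc ∑ x ∈ A i, (μ x).natAbs
            ≤ ∑ x ∈ A i, ∑ b ∈ B.filter (fun b => b i = x), (cf (e.symm b)).natAbs := by
              refine Finset.sum_le_sum fun x _ => ?_
              simp only [hμ]
              exact aux_natAbs_sum_le _ _
          _ = ∑ b ∈ B, (cf (e.symm b)).natAbs :=
              Finset.sum_fiberwise_of_maps_to hmaps (fun b => (cf (e.symm b)).natAbs)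
          _ = h := hcfB
      have hpar : (∑ x ∈ A i, (μ x).natAbs) % 2 = h % 2 := by
        have m1 := aux_sum_natAbs_modEq (A i) μ
        have m2 := aux_sum_natAbs_modEq B (fun b => cf (e.symm b))
        rw [hcfB] at m2
        rw [hμB] at m1
        have hZ : ((∑ x ∈ A i, (μ x).natAbs : ℕ) : ℤ) % 2 = ((h:ℕ) : ℤ) % 2 :=
          m1.trans m2.symm
        exact_mod_cast hZ
      have hmem : e (∑ a ∈ AG, cf a • a) i ∈ foldSignedSumset (∑ x ∈ A i, (μ x).natAbs) (A i) :=
        ⟨μ, rfl, hvalμ⟩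
      exact Finset.mem_coe.mp (hsub i _ hle hpar hmem)
    refine Finset.mem_coe.mpr ?_
    have hmem2 := Finset.mem_image_of_mem (fun b => e.symm b) hPiMem
    have hEq : (fun b => e.symm b) (e (∑ a ∈ AG, cf a • a)) = ∑ a ∈ AG, cf a • a :=
      e.symm_apply_apply _
    rwa [e.symm_apply_apply] at hmem2
  have h1 : rhoPM G m h ≤ (foldSignedSumset h AG).ncard :=
    Nat.sInf_le ⟨AG, hAGcard, rfl⟩
  have h2 : (foldSignedSumset h AG).ncard ≤
      ((Fintype.piFinset S).image (fun b => e.symm b)).card := by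
    have := Set.ncard_le_ncard hsubset (Finset.finite_toSet _)
    rwa [Set.ncard_coe_finset] at this
  have h3 : ((Fintype.piFinset S).image (fun b => e.symm b)).card ≤
      ∏ i, uFun (n i) (ms i) h := by
    calc ((Fintype.piFinset S).image (fun b => e.symm b)).card
        ≤ (Fintype.piFinset S).card := Finset.card_image_le
      _ = ∏ i, (S i).card := Fintype.card_piFinset S
      _ ≤ ∏ i, uFun (n i) (ms i) h := Finset.prod_le_prod' fun i _ => hS i
  exact le_trans h1 (le_trans h2 h3)
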